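/- Let E be a q×p step matrix with nonzero entries {1,…,n}. Then n = p + q − 1, the entries in the lower-left position (q,1) and the upper-right position (1,p) are nonzero, and for each integer c with 1−q ≤ c ≤ p−2, if (i,j) and (i′,j′) denote the unique positions of nonzero entries on the diagonals j−i = c and j′−i′ = c+1 respectively, then either (i′,j′) = (i, j+1) or (i′,j′) = (i−1, j). Hence the positions of the nonzero entries of E form a continuous monotone staircase connecting the lower-left-most and upper-right-most nonzero entries of E. -/

import Mathlib

/-- A `q × p` step matrix with nonzero entries `{1,…,n}`: entries lie in `{0,1,…,n}`;
each element of `{1,…,n}` appears exactly once; in each row (resp. column) the nonzero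
entries occupy consecutive positions and increase from left to right (resp. top to
bottom); and each diagonal parallel to the main diagonal contains exactly one nonzero
entry. (Rows and columns are indexed by `Fin q` and `Fin p`; the diagonal through
position `(i,j)` is determined by `j - i`.) -/
def IsStepMatrix (n q p : ℕ) (E : Fin q → Fin p → ℕ) : Prop :=
  (∀ i j, E i j ≤ n) ∧
  (∀ k : ℕ, 1 ≤ k → k ≤ n → ∃! ij : Fin q × Fin p, E ij.1 ij.2 = k) ∧
  (∀ (i : Fin q) (j₁ j₂ j₃ : Fin p), j₁ ≤ j₂ → j₂ ≤ j₃ →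
    E i j₁ ≠ 0 → E i j₃ ≠ 0 → E i j₂ ≠ 0) ∧
  (∀ (i : Fin q) (j₁ j₂ : Fin p), j₁ < j₂ →
    E i j₁ ≠ 0 → E i j₂ ≠ 0 → E i j₁ < E i j₂) ∧
  (∀ (j : Fin p) (i₁ i₂ i₃ : Fin q), i₁ ≤ i₂ → i₂ ≤ i₃ →
    E i₁ j ≠ 0 → E i₃ j ≠ 0 → E i₂ j ≠ 0) ∧
  (∀ (j : Fin p) (i₁ i₂ : Fin q), i₁ < i₂ →
    E i₁ j ≠ 0 → E i₂ j ≠ 0 → E i₁ j < E i₂ j) ∧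
  (∀ c : ℤ, 1 - (q : ℤ) ≤ c → c ≤ (p : ℤ) - 1 →
    ∃! ij : Fin q × Fin p, ((ij.2 : ℤ) - (ij.1 : ℤ) = c ∧ E ij.1 ij.2 ≠ 0))

/-- For a `q × p` step matrix with nonzero entries `{1,…,n}`: `n = p + q - 1`; the
lower-left entry (position `(q,1)`, i.e. `(q-1,0)` in 0-indexing) and the upper-right
entry (position `(1,p)`, i.e. `(0,p-1)`) are nonzero; and the unique nonzero entries on
consecutive diagonals `j - i = c` and `j' - i' = c + 1` sit at positions related by
`(i',j') = (i, j+1)` or `(i',j') = (i-1, j)`.  Hence the nonzero entries form a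
continuous monotone staircase from the lower-left-most to the upper-right-most
nonzero entry. -/
theorem stepMatrix_staircase (n q p : ℕ) (hn : 1 ≤ n) (hq : 1 ≤ q) (hp : 1 ≤ p)
    (E : Fin q → Fin p → ℕ) (hE : IsStepMatrix n q p E) :
    n = p + q - 1 ∧
    E ⟨q - 1, by omega⟩ ⟨0, by omega⟩ ≠ 0 ∧
    E ⟨0, by omega⟩ ⟨p - 1, by omega⟩ ≠ 0 ∧
    (∀ c : ℤ, 1 - (q : ℤ) ≤ c → c ≤ (p : ℤ) - 2 →
      ∀ (i : Fin q) (j : Fin p) (i' : Fin q) (j' : Fin p),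
        (j : ℤ) - (i : ℤ) = c → E i j ≠ 0 →
        (j' : ℤ) - (i' : ℤ) = c + 1 → E i' j' ≠ 0 →
        (((i' : ℕ) = (i : ℕ) ∧ (j' : ℕ) = (j : ℕ) + 1) ∨
         ((i' : ℕ) + 1 = (i : ℕ) ∧ (j' : ℕ) = (j : ℕ)))) := by
  obtain ⟨hle, huniq, hrowC, _hrowM, hcolC, _hcolM, hdiag⟩ := hE
  have hq' : (1 : ℤ) ≤ q := by exact_mod_cast hq
  have hp' : (1 : ℤ) ≤ p := by exact_mod_cast hp
  -- the set of nonzero positions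
  set S : Finset (Fin q × Fin p) :=
    Finset.univ.filter (fun ij => E ij.1 ij.2 ≠ 0) with hS
  have hmemS : ∀ ij : Fin q × Fin p, ij ∈ S ↔ E ij.1 ij.2 ≠ 0 := by
    intro ij; simp [hS]
  -- cardinality via values
  have hcard1 : S.card = n := by
    rw [show n = (Finset.Icc 1 n).card by simp]
    apply Finset.card_bij (fun ij _ => E ij.1 ij.2)
    · intro ij hij
      rw [hmemS] at hij
      simp only [Finset.mem_Icc]
      exact ⟨Nat.one_le_iff_ne_zero.mpr hij, hle _ _⟩
    · intro a ha b hb hab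
      rw [hmemS] at ha hb
      obtain ⟨w, _, hwu⟩ := huniq (E a.1 a.2) (Nat.one_le_iff_ne_zero.mpr ha) (hle _ _)
      exact (hwu a rfl).trans (hwu b hab.symm).symm
    · intro k hk
      simp only [Finset.mem_Icc] at hk
      obtain ⟨ij, hij, _⟩ := huniq k hk.1 hk.2
      exact ⟨ij, (hmemS ij).mpr (by rw [hij]; omega), hij⟩
  -- cardinality via diagonals
  have hcard2 : S.card = p + q - 1 := by
    have hIcc : (Finset.Icc (1 - (q:ℤ)) ((p:ℤ) - 1)).card = p + q - 1 := by
      rw [Int.card_Icc]; omega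
    rw [← hIcc]
    apply Finset.card_bij (fun ij _ => ((ij.2 : ℤ) - (ij.1 : ℤ)))
    · intro ij _
      have h3 : ((ij.1 : ℕ) : ℤ) < q := by exact_mod_cast ij.1.isLt
      have h4 : ((ij.2 : ℕ) : ℤ) < p := by exact_mod_cast ij.2.isLt
      simp only [Finset.mem_Icc]
      omega
    · intro a ha b hb hab
      rw [hmemS] at ha hb
      have h3 : ((a.1 : ℕ) : ℤ) < q := by exact_mod_cast a.1.isLt
      have h4 : ((a.2 : ℕ) : ℤ) < p := by exact_mod_cast a.2.isLt
      obtain ⟨w, _, hwu⟩ := hdiag ((a.2 : ℤ) - (a.1 : ℤ)) (by omega) (by omega)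
      exact (hwu a ⟨rfl, ha⟩).trans (hwu b ⟨hab.symm, hb⟩).symm
    · intro c hc
      simp only [Finset.mem_Icc] at hc
      obtain ⟨ij, ⟨hd, hne⟩, _⟩ := hdiag c hc.1 hc.2
      exact ⟨ij, (hmemS ij).mpr hne, hd⟩
  have hnval : n = p + q - 1 := by omega
  -- corners
  have hLL : E ⟨q - 1, by omega⟩ ⟨0, by omega⟩ ≠ 0 := by
    obtain ⟨⟨i, j⟩, ⟨hd0, hne0⟩, _⟩ := hdiag (1 - (q:ℤ)) le_rfl (by omega)
    have hd : ((j : ℕ) : ℤ) - ((i : ℕ) : ℤ) = 1 - q := hd0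
    have hne : E i j ≠ 0 := hne0
    have h1 : ((i : ℕ) : ℤ) < q := by exact_mod_cast i.isLt
    have h2 : ((j : ℕ) : ℤ) < p := by exact_mod_cast j.isLt
    rw [show (⟨q - 1, by omega⟩ : Fin q) = i from Fin.ext (by simp only [Fin.val_mk]; omega),
        show (⟨0, by omega⟩ : Fin p) = j from Fin.ext (by simp only [Fin.val_mk]; omega)]
    exact hne
  have hUR : E ⟨0, by omega⟩ ⟨p - 1, by omega⟩ ≠ 0 := by
    obtain ⟨⟨i, j⟩, ⟨hd0, hne0⟩, _⟩ := hdiag ((p:ℤ) - 1) (by omega) le_rfl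
    have hd : ((j : ℕ) : ℤ) - ((i : ℕ) : ℤ) = (p:ℤ) - 1 := hd0
    have hne : E i j ≠ 0 := hne0
    have h1 : ((i : ℕ) : ℤ) < q := by exact_mod_cast i.isLt
    have h2 : ((j : ℕ) : ℤ) < p := by exact_mod_cast j.isLt
    rw [show (⟨0, by omega⟩ : Fin q) = i from Fin.ext (by simp only [Fin.val_mk]; omega),
        show (⟨p - 1, by omega⟩ : Fin p) = j from Fin.ext (by simp only [Fin.val_mk]; omega)]
    exact hne
  -- the key invariant: any nonzero entry on a diagonal > c lies weakly above and to the
  -- right of the unique nonzero entry of diagonal c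
  have key : ∀ c : ℤ, 1 - (q:ℤ) ≤ c → c ≤ (p:ℤ) - 1 →
      ∀ (i : Fin q) (j : Fin p), (j : ℤ) - (i : ℤ) = c → E i j ≠ 0 →
      ∀ (r : Fin q) (s : Fin p), E r s ≠ 0 → c + 1 ≤ (s : ℤ) - (r : ℤ) →
      (r : ℤ) ≤ (i : ℤ) ∧ (j : ℤ) ≤ (s : ℤ) := by
    intro c hc1
    refine Int.le_induction (motive := fun c _ => c ≤ (p:ℤ) - 1 →
      ∀ (i : Fin q) (j : Fin p), (j : ℤ) - (i : ℤ) = c → E i j ≠ 0 →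
      ∀ (r : Fin q) (s : Fin p), E r s ≠ 0 → c + 1 ≤ (s : ℤ) - (r : ℤ) →
      (r : ℤ) ≤ (i : ℤ) ∧ (j : ℤ) ≤ (s : ℤ)) ?_ ?_ c hc1
    · intro _ i j hd _ r s _ _
      have h1 : ((i : ℕ) : ℤ) < q := by exact_mod_cast i.isLt
      have h2 : ((r : ℕ) : ℤ) < q := by exact_mod_cast r.isLt
      omega
    · intro c hc ih hcp i j hd hne r s hnrs hdrs
      -- the witness on diagonal c
      obtain ⟨⟨i₀, j₀⟩, ⟨hd0', hne0'⟩, _⟩ := hdiag c hc (by omega)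
      have hd0 : ((j₀ : ℕ) : ℤ) - ((i₀ : ℕ) : ℤ) = c := hd0'
      have hne0 : E i₀ j₀ ≠ 0 := hne0'
      have hiq : ((i₀ : ℕ) : ℤ) < q := by exact_mod_cast i₀.isLt
      have hjp : ((j₀ : ℕ) : ℤ) < p := by exact_mod_cast j₀.isLt
      -- apply invariant at c to (i,j) and to (r,s)
      have H1 := ih (by omega) i₀ j₀ hd0 hne0 i j hne (by omega)
      have H2 := ih (by omega) i₀ j₀ hd0 hne0 r s hnrs (by omega)
      -- uniqueness on diagonal c+1
      obtain ⟨w, hw, hwu⟩ := hdiag (c + 1) (by omega) hcp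
      have hij : (i, j) = w := hwu (i, j) ⟨hd, hne⟩
      -- two cases for (i,j) relative to (i₀,j₀)
      rcases (show ((i : ℤ) = i₀ ∧ (j : ℤ) = (j₀ : ℤ) + 1) ∨
          ((i : ℤ) = (i₀ : ℤ) - 1 ∧ (j : ℤ) = j₀) by omega) with ⟨hA1, hA2⟩ | ⟨hB1, hB2⟩
      · -- (i,j) = (i₀, j₀+1); need j ≤ s, i.e. exclude s = j₀
        refine ⟨by omega, ?_⟩
        by_contra hcon
        push_neg at hcon
        have hs : (s : ℤ) = j₀ := by omega
        have hsj : s = j₀ := Fin.ext (by omega)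
        -- then r ≤ i₀ - 2 and column j₀ gives a nonzero at (i₀-1, j₀), on diag c+1
        have hr2 : (r : ℤ) ≤ (i₀ : ℤ) - 2 := by omega
        have hq2 : 1 ≤ (i₀ : ℕ) := by omega
        have hmlt : (i₀ : ℕ) - 1 < q := by omega
        have hmv : ((⟨(i₀ : ℕ) - 1, hmlt⟩ : Fin q) : ℕ) = (i₀ : ℕ) - 1 := rfl
        have h5 : E ⟨(i₀ : ℕ) - 1, hmlt⟩ j₀ ≠ 0 := by
          apply hcolC j₀ r ⟨(i₀ : ℕ) - 1, hmlt⟩ i₀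
          · rw [Fin.le_def]; omega
          · rw [Fin.le_def]; omega
          · rwa [hsj] at hnrs
          · exact hne0
        have hmd : ((j₀ : ℤ) - ((⟨(i₀ : ℕ) - 1, hmlt⟩ : Fin q) : ℤ)) = c + 1 := by omega
        have he : ((⟨(i₀ : ℕ) - 1, hmlt⟩ : Fin q), j₀) = (i, j) :=
          (hwu _ ⟨hmd, h5⟩).trans hij.symm
        have he2 : j₀ = j := congrArg Prod.snd he
        have : ((j₀ : ℕ) : ℤ) = ((j : ℕ) : ℤ) := by rw [he2]
        omega
      · -- (i,j) = (i₀-1, j₀); need r ≤ i, i.e. exclude r = i₀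
        refine ⟨?_, by omega⟩
        by_contra hcon
        push_neg at hcon
        have hr : (r : ℤ) = i₀ := by omega
        have hri : r = i₀ := Fin.ext (by omega)
        have hsp : ((s : ℕ) : ℤ) < p := by exact_mod_cast s.isLt
        have hs2 : (j₀ : ℤ) + 2 ≤ (s : ℤ) := by omega
        have hmlt : (j₀ : ℕ) + 1 < p := by omega
        have hmv : ((⟨(j₀ : ℕ) + 1, hmlt⟩ : Fin p) : ℕ) = (j₀ : ℕ) + 1 := rfl
        have h5 : E i₀ ⟨(j₀ : ℕ) + 1, hmlt⟩ ≠ 0 := by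
          apply hrowC i₀ j₀ ⟨(j₀ : ℕ) + 1, hmlt⟩ s
          · rw [Fin.le_def]; omega
          · rw [Fin.le_def]; omega
          · exact hne0
          · rwa [hri] at hnrs
        have hmd : (((⟨(j₀ : ℕ) + 1, hmlt⟩ : Fin p) : ℤ) - (i₀ : ℤ)) = c + 1 := by omega
        have he : (i₀, (⟨(j₀ : ℕ) + 1, hmlt⟩ : Fin p)) = (i, j) :=
          (hwu _ ⟨hmd, h5⟩).trans hij.symm
        have he2 : i₀ = i := congrArg Prod.fst he
        have : ((i₀ : ℕ) : ℤ) = ((i : ℕ) : ℤ) := by rw [he2]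
        omega
  refine ⟨hnval, hLL, hUR, ?_⟩
  intro c hc1 hc2 i j i' j' hd hne hd' hne'
  have H := key c hc1 (by omega) i j hd hne i' j' hne' (by omega)
  omega
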